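/- With the flip strategy that always replaces a crossing pair on x-sorted endpoints p1,p2,p3,p4 by the segments p1p2 and p3p4, any perfect straight-line matching on 2n points in general position with distinct x-coordinates reaches a non-crossing matching after at most n²/2 flips. -/

import Mathlib

/-- `M` is a perfect straight-line matching on the point set `P`: its elements
are (ordered representatives of) segments with endpoints in `P`, and every
point of `P` is an endpoint of exactly one segment. -/
def IsSegMatching (P : Finset (ℝ × ℝ)) (M : Finset ((ℝ × ℝ) × (ℝ × ℝ))) : Prop :=
  (∀ s ∈ M, s.1 ∈ P ∧ s.2 ∈ P ∧ s.1 ≠ s.2) ∧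
  ∀ p ∈ P, ∃! s, s ∈ M ∧ (p = s.1 ∨ p = s.2)

open Classical in
/-- `M'` is obtained from `M` by the `x`-sorted flip: two crossing segments
with endpoint set `{p₁, p₂, p₃, p₄}` (sorted by strictly increasing
`x`-coordinate) are replaced by the segments `p₁p₂` and `p₃p₄`. -/
def IsXSortedFlip (M M' : Finset ((ℝ × ℝ) × (ℝ × ℝ))) : Prop :=
  ∃ p₁ p₂ p₃ p₄ : ℝ × ℝ, ∃ s t, s ∈ M ∧ t ∈ M ∧ s ≠ t ∧
    p₁.1 < p₂.1 ∧ p₂.1 < p₃.1 ∧ p₃.1 < p₄.1 ∧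
    ({s.1, s.2, t.1, t.2} : Set (ℝ × ℝ)) = {p₁, p₂, p₃, p₄} ∧
    (openSegment ℝ s.1 s.2 ∩ openSegment ℝ t.1 t.2).Nonempty ∧
    M' = (M \ {s, t}) ∪ {(p₁, p₂), (p₃, p₄)}

open Classical
noncomputable section
abbrev Seg := (ℝ × ℝ) × (ℝ × ℝ)
def xlo (s : Seg) : ℝ := min s.1.1 s.2.1
def xhi (s : Seg) : ℝ := max s.1.1 s.2.1
def Ov (s t : Seg) : Prop := xlo t ≤ xhi s ∧ xlo s ≤ xhi t
def gg (s t : Seg) : ℕ := if s ≠ t ∧ Ov s t then 1 else 0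
def Phi (M : Finset Seg) : ℕ := ∑ u ∈ M, ∑ v ∈ M, gg u v

lemma Ov_comm {s t : Seg} : Ov s t ↔ Ov t s := by unfold Ov; tauto
lemma gg_comm (s t : Seg) : gg s t = gg t s := by
  unfold gg; by_cases h : s = t
  · simp [h]
  · by_cases h2 : Ov s t
    · simp [h, Ne.symm h, h2, Ov_comm.mp h2]
    · simp [h, Ne.symm h, h2, fun hh => h2 (Ov_comm.mpr hh), Ov_comm.symm.not.mp (by simpa using h2)]
lemma gg_self (s : Seg) : gg s s = 0 := by simp [gg]
lemma gg_le_one (s t : Seg) : gg s t ≤ 1 := by unfold gg; split <;> omega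

lemma Phi_insert2 (a b : Seg) (R : Finset Seg) (ha : a ∉ R) (hb : b ∉ R) (hab : a ≠ b) :
    Phi (insert a (insert b R)) = Phi R + 2 * gg a b + 2 * ∑ u ∈ R, (gg u a + gg u b) := by
  have ha' : a ∉ insert b R := by simp [ha, hab]
  unfold Phi
  rw [Finset.sum_insert ha', Finset.sum_insert hb]
  have inner : ∀ u : Seg, ∑ v ∈ insert a (insert b R), gg u v
      = gg u a + gg u b + ∑ v ∈ R, gg u v := by
    intro u; rw [Finset.sum_insert ha', Finset.sum_insert hb]; ring
  simp only [inner]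
  rw [Finset.sum_congr rfl (fun u _ => rfl)]
  have : ∑ u ∈ R, (gg u a + gg u b + ∑ v ∈ R, gg u v)
      = (∑ u ∈ R, (gg u a + gg u b)) + ∑ u ∈ R, ∑ v ∈ R, gg u v := by
    rw [← Finset.sum_add_distrib]
  rw [this, gg_self a, gg_self b, gg_comm b a]
  have e1 : ∑ v ∈ R, gg a v = ∑ v ∈ R, gg v a := Finset.sum_congr rfl (fun v _ => gg_comm a v)
  have e2 : ∑ v ∈ R, gg b v = ∑ v ∈ R, gg v b := Finset.sum_congr rfl (fun v _ => gg_comm b v)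
  simp only [Finset.sum_add_distrib, e1, e2]
  ring

lemma x_mem_open {a b z : ℝ × ℝ} (hz : z ∈ openSegment ℝ a b) (hab : a.1 ≠ b.1) :
    min a.1 b.1 < z.1 ∧ z.1 < max a.1 b.1 := by
  obtain ⟨x, y, hx, hy, hxy, hzeq⟩ := hz
  have hz1 : z.1 = x * a.1 + y * b.1 := by
    rw [← hzeq]; simp [Prod.fst_add, Prod.smul_fst, smul_eq_mul]
  have hx' : x = 1 - y := by linarith
  have e1 : z.1 - a.1 = y * (b.1 - a.1) := by rw [hz1, hx']; ring
  have e2 : b.1 - z.1 = (1 - y) * (b.1 - a.1) := by rw [hz1, hx']; ring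
  have hy1 : y < 1 := by linarith
  rcases lt_or_gt_of_ne hab with h | h
  · rw [min_eq_left h.le, max_eq_right h.le]
    constructor
    · nlinarith [mul_pos hy (sub_pos.mpr h)]
    · nlinarith [mul_pos (by linarith : (0:ℝ) < 1 - y) (sub_pos.mpr h)]
  · rw [min_eq_right h.le, max_eq_left h.le]
    constructor
    · nlinarith [mul_pos (by linarith : (0:ℝ) < 1 - y) (sub_pos.mpr h)]
    · nlinarith [mul_pos hy (sub_pos.mpr h)]

lemma sort4 (a b c d : ℝ × ℝ)
    (hx : ∀ p ∈ [a,b,c,d], ∀ q ∈ [a,b,c,d], p ≠ q → p.1 ≠ q.1)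
    (hnd : ([a,b,c,d] : List (ℝ × ℝ)).Nodup) :
    ∃ p₁ p₂ p₃ p₄ : ℝ × ℝ, ([a,b,c,d] : List (ℝ × ℝ)).Perm [p₁,p₂,p₃,p₄] ∧
      p₁.1 < p₂.1 ∧ p₂.1 < p₃.1 ∧ p₃.1 < p₄.1 := by
  haveI : IsTotal (ℝ × ℝ) (fun p q => p.1 ≤ q.1) := ⟨fun p q => le_total p.1 q.1⟩
  haveI : IsTrans (ℝ × ℝ) (fun p q => p.1 ≤ q.1) := ⟨fun _ _ _ h h' => le_trans h h'⟩
  set l := List.insertionSort (fun p q => p.1 ≤ q.1) [a,b,c,d] with hl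
  have hperm : ([a,b,c,d] : List (ℝ × ℝ)).Perm l := (List.perm_insertionSort _ _).symm
  have hsort : l.Pairwise (fun p q => p.1 ≤ q.1) := List.pairwise_insertionSort _ _
  have hlen : l.length = 4 := by rw [← hperm.length_eq]; rfl
  have hnd' : l.Nodup := hperm.nodup_iff.mp hnd
  match hl' : l, hlen with
  | [p₁,p₂,p₃,p₄], _ =>
    rw [hl'] at hperm hsort hnd'
    have hle : (p₁.1 ≤ p₂.1 ∧ p₁.1 ≤ p₃.1 ∧ p₁.1 ≤ p₄.1) ∧ (p₂.1 ≤ p₃.1 ∧ p₂.1 ≤ p₄.1) ∧ p₃.1 ≤ p₄.1 := by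
      simpa using hsort
    have hmem : ∀ x ∈ ([p₁,p₂,p₃,p₄] : List (ℝ × ℝ)), x ∈ ([a,b,c,d] : List (ℝ × ℝ)) :=
      fun x hx => hperm.symm.subset hx
    have hne : p₁ ≠ p₂ ∧ p₂ ≠ p₃ ∧ p₃ ≠ p₄ := by
      have := hnd'
      simp [List.nodup_cons] at this
      tauto
    refine ⟨p₁, p₂, p₃, p₄, hperm, ?_, ?_, ?_⟩
    · exact lt_of_le_of_ne hle.1.1 (hx _ (hmem _ (by simp)) _ (hmem _ (by simp)) hne.1)
    · exact lt_of_le_of_ne hle.2.1.1 (hx _ (hmem _ (by simp)) _ (hmem _ (by simp)) hne.2.1)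
    · exact lt_of_le_of_ne hle.2.2 (hx _ (hmem _ (by simp)) _ (hmem _ (by simp)) hne.2.2)

set_option maxHeartbeats 2000000 in
set_option maxHeartbeats 2000000 in
lemma classifyR (u1 u2 v1 v2 x1 x2 x3 x4 : ℝ) (hu : u1 < u2) (hv : v1 < v2)
    (h12 : x1 < x2) (h23 : x2 < x3) (h34 : x3 < x4)
    (hperm : ([u1,u2,v1,v2] : List ℝ).Perm [x1,x2,x3,x4])
    (hcr : v1 < u2 ∧ u1 < v2) :
    (u1 = x1 ∧ u2 = x3 ∧ v1 = x2 ∧ v2 = x4) ∨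
    (u1 = x2 ∧ u2 = x4 ∧ v1 = x1 ∧ v2 = x3) ∨
    (u1 = x1 ∧ u2 = x4 ∧ v1 = x2 ∧ v2 = x3) ∨
    (u1 = x2 ∧ u2 = x3 ∧ v1 = x1 ∧ v2 = x4) := by
  have hndR : ([x1,x2,x3,x4] : List ℝ).Nodup := by
    have a12 : x1 ≠ x2 := ne_of_lt h12
    have a13 : x1 ≠ x3 := ne_of_lt (h12.trans h23)
    have a14 : x1 ≠ x4 := ne_of_lt ((h12.trans h23).trans h34)
    have a23 : x2 ≠ x3 := ne_of_lt h23
    have a24 : x2 ≠ x4 := ne_of_lt (h23.trans h34)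
    have a34 : x3 ≠ x4 := ne_of_lt h34
    simp only [List.nodup_cons, List.mem_cons, List.not_mem_nil, List.nodup_nil]
    tauto
  have hnd : ([u1,u2,v1,v2] : List ℝ).Nodup := hperm.nodup_iff.mpr hndR
  have hne : u1 ≠ u2 ∧ u1 ≠ v1 ∧ u1 ≠ v2 ∧ u2 ≠ v1 ∧ u2 ≠ v2 ∧ v1 ≠ v2 := by
    simp only [List.nodup_cons, List.mem_cons, List.not_mem_nil, List.nodup_nil] at hnd
    tauto
  obtain ⟨hcr1, hcr2⟩ := hcr
  have m1 : u1 = x1 ∨ u1 = x2 ∨ u1 = x3 ∨ u1 = x4 := by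
    have := hperm.subset (show u1 ∈ ([u1,u2,v1,v2] : List ℝ) by simp); simpa using this
  have m2 : u2 = x1 ∨ u2 = x2 ∨ u2 = x3 ∨ u2 = x4 := by
    have := hperm.subset (show u2 ∈ ([u1,u2,v1,v2] : List ℝ) by simp); simpa using this
  have m3 : v1 = x1 ∨ v1 = x2 ∨ v1 = x3 ∨ v1 = x4 := by
    have := hperm.subset (show v1 ∈ ([u1,u2,v1,v2] : List ℝ) by simp); simpa using this
  have m4 : v2 = x1 ∨ v2 = x2 ∨ v2 = x3 ∨ v2 = x4 := by
    have := hperm.subset (show v2 ∈ ([u1,u2,v1,v2] : List ℝ) by simp); simpa using this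
  obtain ⟨n12, n13, n14, n23, n24, n34⟩ := hne
  rcases m1 with rfl|rfl|rfl|rfl <;> rcases m2 with rfl|rfl|rfl|rfl <;>
    rcases m3 with rfl|rfl|rfl|rfl <;> rcases m4 with rfl|rfl|rfl|rfl <;>
    first
      | (exfalso; exact absurd rfl (by assumption))
      | (exfalso; linarith)
      | tauto

lemma iteA {P Q P' Q' : Prop} [Decidable P] [Decidable Q] [Decidable P'] [Decidable Q']
    (h1 : P → P') (h2 : Q → Q') :
    (if P then 1 else 0) + (if Q then 1 else 0) ≤ ((if P' then 1 else 0) + (if Q' then 1 else 0) : ℕ) := by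
  split_ifs <;> simp_all

lemma iteA' {P Q P' Q' : Prop} [Decidable P] [Decidable Q] [Decidable P'] [Decidable Q']
    (h1 : P → Q') (h2 : Q → P') :
    (if P then 1 else 0) + (if Q then 1 else 0) ≤ ((if P' then 1 else 0) + (if Q' then 1 else 0) : ℕ) := by
  split_ifs <;> simp_all

lemma iteB {P Q P' Q' : Prop} [Decidable P] [Decidable Q] [Decidable P'] [Decidable Q']
    (h1 : P → P') (h2 : Q → P') (h3 : P → Q → Q') :
    (if P then 1 else 0) + (if Q then 1 else 0) ≤ ((if P' then 1 else 0) + (if Q' then 1 else 0) : ℕ) := by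
  split_ifs <;> simp_all

lemma iteB' {P Q P' Q' : Prop} [Decidable P] [Decidable Q] [Decidable P'] [Decidable Q']
    (h1 : P → Q') (h2 : Q → Q') (h3 : P → Q → P') :
    (if P then 1 else 0) + (if Q then 1 else 0) ≤ ((if P' then 1 else 0) + (if Q' then 1 else 0) : ℕ) := by
  split_ifs <;> simp_all

lemma gg_le_ov (u v : Seg) : gg u v ≤ if Ov u v then 1 else 0 := by
  unfold gg; split_ifs <;> simp_all

lemma gg_of_ne {u v : Seg} (h : u ≠ v) : gg u v = if Ov u v then 1 else 0 := by
  unfold gg; split_ifs <;> simp_all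

lemma endpoint_unique {P : Finset (ℝ × ℝ)} {M : Finset Seg} (hM : IsSegMatching P M)
    {s t : Seg} (hs : s ∈ M) (ht : t ∈ M) (p : ℝ × ℝ)
    (hps : p = s.1 ∨ p = s.2) (hpt : p = t.1 ∨ p = t.2) : s = t := by
  have hp : p ∈ P := by
    rcases hps with rfl | rfl
    · exact (hM.1 s hs).1
    · exact (hM.1 s hs).2.1
  obtain ⟨u, _, huniq⟩ := hM.2 p hp
  exact (huniq s ⟨hs, hps⟩).trans (huniq t ⟨ht, hpt⟩).symm

lemma perm_minmax (a b : ℝ) : ([min a b, max a b] : List ℝ).Perm [a, b] := by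
  rcases le_total a b with h | h
  · rw [min_eq_left h, max_eq_right h]
  · rw [min_eq_right h, max_eq_left h]
    exact List.Perm.swap a b []

set_option maxHeartbeats 2000000 in
lemma flip_step (P : Finset (ℝ × ℝ)) (hinj : Set.InjOn Prod.fst (↑P : Set (ℝ × ℝ)))
    (M : Finset Seg) (hM : IsSegMatching P M)
    (s t : Seg) (hs : s ∈ M) (ht : t ∈ M) (hst : s ≠ t)
    (hx : (openSegment ℝ s.1 s.2 ∩ openSegment ℝ t.1 t.2).Nonempty) :
    ∃ M', IsXSortedFlip M M' ∧ IsSegMatching P M' ∧ Phi M' + 2 ≤ Phi M := by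
  obtain ⟨hs1P, hs2P, hsne⟩ := hM.1 s hs
  obtain ⟨ht1P, ht2P, htne⟩ := hM.1 t ht
  -- the four endpoints are pairwise distinct
  have d13 : s.1 ≠ t.1 := fun h => hst (endpoint_unique hM hs ht s.1 (Or.inl rfl) (Or.inl h))
  have d14 : s.1 ≠ t.2 := fun h => hst (endpoint_unique hM hs ht s.1 (Or.inl rfl) (Or.inr h))
  have d23 : s.2 ≠ t.1 := fun h => hst (endpoint_unique hM hs ht s.2 (Or.inr rfl) (Or.inl h))
  have d24 : s.2 ≠ t.2 := fun h => hst (endpoint_unique hM hs ht s.2 (Or.inr rfl) (Or.inr h))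
  have memP : ∀ p ∈ ([s.1, s.2, t.1, t.2] : List (ℝ × ℝ)), p ∈ P := by
    intro p hp; simp at hp; rcases hp with rfl|rfl|rfl|rfl <;> assumption
  have hxne : ∀ p ∈ ([s.1, s.2, t.1, t.2] : List (ℝ × ℝ)),
      ∀ q ∈ ([s.1, s.2, t.1, t.2] : List (ℝ × ℝ)), p ≠ q → p.1 ≠ q.1 := by
    intro p hp q hq hpq h
    exact hpq (hinj (memP p hp) (memP q hq) h)
  have hnd : ([s.1, s.2, t.1, t.2] : List (ℝ × ℝ)).Nodup := by
    simp [List.nodup_cons, hsne, htne, d13, d14, d23, d24]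
  obtain ⟨p₁, p₂, p₃, p₄, hperm, h12, h23, h34⟩ := sort4 s.1 s.2 t.1 t.2 hxne hnd
  -- the crossing point
  obtain ⟨z, hz1, hz2⟩ := hx
  have hz1' := x_mem_open hz1 (hxne s.1 (by simp) s.2 (by simp) hsne)
  have hz2' := x_mem_open hz2 (hxne t.1 (by simp) t.2 (by simp) htne)
  have hus : xlo s < xhi s := lt_trans hz1'.1 hz1'.2
  have hut : xlo t < xhi t := lt_trans hz2'.1 hz2'.2
  -- classification
  have hpermx : ([xlo s, xhi s, xlo t, xhi t] : List ℝ).Perm [p₁.1, p₂.1, p₃.1, p₄.1] := by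
    have h1 : ([xlo s, xhi s, xlo t, xhi t] : List ℝ).Perm [s.1.1, s.2.1, t.1.1, t.2.1] := by
      have := (perm_minmax s.1.1 s.2.1).append (perm_minmax t.1.1 t.2.1)
      simpa [xlo, xhi] using this
    have h2 : ([s.1.1, s.2.1, t.1.1, t.2.1] : List ℝ).Perm [p₁.1, p₂.1, p₃.1, p₄.1] := by
      have := hperm.map Prod.fst
      simpa using this
    exact h1.trans h2
  have hc := classifyR (xlo s) (xhi s) (xlo t) (xhi t) p₁.1 p₂.1 p₃.1 p₄.1 hus hut
    h12 h23 h34 hpermx ⟨lt_trans hz2'.1 hz1'.2, lt_trans hz1'.1 hz2'.2⟩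
  -- abbreviations
  set x1 := p₁.1
  set x2 := p₂.1
  set x3 := p₃.1
  set x4 := p₄.1
  have hls : xlo s = x1 ∨ xlo s = x2 := by rcases hc with ⟨h,_⟩|⟨h,_⟩|⟨h,_⟩|⟨h,_⟩ <;> tauto
  have hhs : xhi s = x3 ∨ xhi s = x4 := by rcases hc with ⟨_,h,_⟩|⟨_,h,_⟩|⟨_,h,_⟩|⟨_,h,_⟩ <;> tauto
  have hlt : xlo t = x1 ∨ xlo t = x2 := by rcases hc with ⟨_,_,h,_⟩|⟨_,_,h,_⟩|⟨_,_,h,_⟩|⟨_,_,h,_⟩ <;> tauto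
  have hht : xhi t = x3 ∨ xhi t = x4 := by rcases hc with ⟨_,_,_,h⟩|⟨_,_,_,h⟩|⟨_,_,_,h⟩|⟨_,_,_,h⟩ <;> tauto
  set n₁ : Seg := (p₁, p₂) with hn1
  set n₂ : Seg := (p₃, p₄) with hn2
  have hxlo1 : xlo n₁ = x1 := min_eq_left h12.le
  have hxhi1 : xhi n₁ = x2 := max_eq_right h12.le
  have hxlo2 : xlo n₂ = x3 := min_eq_left h34.le
  have hxhi2 : xhi n₂ = x4 := max_eq_right h34.le
  -- the new segments are not in M
  have hmem4 : ∀ q : ℝ × ℝ, (q = s.1 ∨ q = s.2 ∨ q = t.1 ∨ q = t.2) ↔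
      (q = p₁ ∨ q = p₂ ∨ q = p₃ ∨ q = p₄) := by
    intro q
    constructor
    · intro h; have : q ∈ ([s.1,s.2,t.1,t.2] : List (ℝ×ℝ)) := by simpa using h
      simpa using hperm.subset this
    · intro h; have : q ∈ ([p₁,p₂,p₃,p₄] : List (ℝ×ℝ)) := by simpa using h
      simpa using hperm.symm.subset this
  have hn1st : n₁ ≠ s ∧ n₁ ≠ t := by
    constructor
    · intro h; rw [← h] at hhs; rw [hxhi1] at hhs
      rcases hhs with h'|h' <;> linarith
    · intro h; rw [← h] at hht; rw [hxhi1] at hht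
      rcases hht with h'|h' <;> linarith
  have hn2st : n₂ ≠ s ∧ n₂ ≠ t := by
    constructor
    · intro h; rw [← h] at hls; rw [hxlo2] at hls
      rcases hls with h'|h' <;> linarith
    · intro h; rw [← h] at hlt; rw [hxlo2] at hlt
      rcases hlt with h'|h' <;> linarith
  have hp1e : p₁ = s.1 ∨ p₁ = s.2 ∨ p₁ = t.1 ∨ p₁ = t.2 := (hmem4 p₁).mpr (Or.inl rfl)
  have hp2e : p₂ = s.1 ∨ p₂ = s.2 ∨ p₂ = t.1 ∨ p₂ = t.2 := (hmem4 p₂).mpr (Or.inr (Or.inl rfl))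
  have hp3e : p₃ = s.1 ∨ p₃ = s.2 ∨ p₃ = t.1 ∨ p₃ = t.2 := (hmem4 p₃).mpr (Or.inr (Or.inr (Or.inl rfl)))
  have hp4e : p₄ = s.1 ∨ p₄ = s.2 ∨ p₄ = t.1 ∨ p₄ = t.2 := (hmem4 p₄).mpr (Or.inr (Or.inr (Or.inr rfl)))
  have hn1M : n₁ ∉ M := by
    intro hmem
    have : n₁ = s ∨ n₁ = t := by
      rcases hp1e with h|h|h|h
      · exact Or.inl (endpoint_unique hM hmem hs p₁ (Or.inl rfl) (Or.inl h))
      · exact Or.inl (endpoint_unique hM hmem hs p₁ (Or.inl rfl) (Or.inr h))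
      · exact Or.inr (endpoint_unique hM hmem ht p₁ (Or.inl rfl) (Or.inl h))
      · exact Or.inr (endpoint_unique hM hmem ht p₁ (Or.inl rfl) (Or.inr h))
    rcases this with h|h
    · exact hn1st.1 h
    · exact hn1st.2 h
  have hn2M : n₂ ∉ M := by
    intro hmem
    have : n₂ = s ∨ n₂ = t := by
      rcases hp3e with h|h|h|h
      · exact Or.inl (endpoint_unique hM hmem hs p₃ (Or.inl rfl) (Or.inl h))
      · exact Or.inl (endpoint_unique hM hmem hs p₃ (Or.inl rfl) (Or.inr h))
      · exact Or.inr (endpoint_unique hM hmem ht p₃ (Or.inl rfl) (Or.inl h))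
      · exact Or.inr (endpoint_unique hM hmem ht p₃ (Or.inl rfl) (Or.inr h))
    rcases this with h|h
    · exact hn2st.1 h
    · exact hn2st.2 h
  have hn12 : n₁ ≠ n₂ := by
    intro h
    have : p₁ = p₃ := congrArg Prod.fst h
    have : x1 = x3 := congrArg Prod.fst this
    linarith
  set R : Finset Seg := M \ {s, t} with hR
  have hsR : s ∉ R := by simp [hR]
  have htR : t ∉ R := by simp [hR]
  have hRmem : ∀ {v : Seg}, v ∈ R → v ∈ M ∧ v ≠ s ∧ v ≠ t := by
    intro v hv
    rw [hR] at hv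
    have h' := Finset.mem_sdiff.mp hv
    simp only [Finset.mem_insert, Finset.mem_singleton] at h'
    exact ⟨h'.1, not_or.mp h'.2⟩
  have hn1R : n₁ ∉ R := fun h => hn1M (hRmem h).1
  have hn2R : n₂ ∉ R := fun h => hn2M (hRmem h).1
  have hMeq : M = insert s (insert t R) := by
    ext u
    simp only [hR, Finset.mem_insert, Finset.mem_sdiff, Finset.mem_singleton]
    constructor
    · intro hu
      by_cases h1 : u = s
      · exact Or.inl h1
      · by_cases h2 : u = t
        · exact Or.inr (Or.inl h2)
        · exact Or.inr (Or.inr ⟨hu, not_or.mpr ⟨h1, h2⟩⟩)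
    · rintro (rfl | rfl | ⟨hu, -⟩) <;> assumption
  set M' : Finset Seg := (M \ {s, t}) ∪ {(p₁, p₂), (p₃, p₄)} with hM'
  have hM'eq : M' = insert n₁ (insert n₂ R) := by
    rw [hM']
    ext u
    simp only [Finset.mem_union, Finset.mem_insert, Finset.mem_singleton]
    constructor
    · rintro (h | rfl | rfl)
      · exact Or.inr (Or.inr h)
      · exact Or.inl rfl
      · exact Or.inr (Or.inl rfl)
    · rintro (rfl | rfl | h)
      · exact Or.inr (Or.inl rfl)
      · exact Or.inr (Or.inr rfl)
      · exact Or.inl h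
  -- Phi computation
  have hPhiM : Phi M = Phi R + 2 * gg s t + 2 * ∑ u ∈ R, (gg u s + gg u t) := by
    rw [hMeq]; exact Phi_insert2 s t R hsR htR hst
  have hPhiM' : Phi M' = Phi R + 2 * gg n₁ n₂ + 2 * ∑ u ∈ R, (gg u n₁ + gg u n₂) := by
    rw [hM'eq]; exact Phi_insert2 n₁ n₂ R hn1R hn2R hn12
  have hggst : gg s t = 1 := by
    rw [gg_of_ne hst, if_pos]
    exact ⟨le_of_lt (lt_trans hz2'.1 hz1'.2), le_of_lt (lt_trans hz1'.1 hz2'.2)⟩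
  have hggn : gg n₁ n₂ = 0 := by
    rw [gg_of_ne hn12, if_neg]
    intro h
    rw [Ov, hxlo2, hxhi1] at h
    linarith [h.1]
  have hsum : ∑ u ∈ R, (gg u n₁ + gg u n₂) ≤ ∑ u ∈ R, (gg u s + gg u t) := by
    apply Finset.sum_le_sum
    intro u hu
    have hune : u ≠ s ∧ u ≠ t := (hRmem hu).2
    calc gg u n₁ + gg u n₂
        ≤ (if Ov u n₁ then 1 else 0) + (if Ov u n₂ then 1 else 0) :=
          Nat.add_le_add (gg_le_ov u n₁) (gg_le_ov u n₂)
      _ ≤ (if Ov u s then 1 else 0) + (if Ov u t then 1 else 0) := by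
          simp only [Ov, hxlo1, hxhi1, hxlo2, hxhi2]
          rcases hc with ⟨e1,e2,e3,e4⟩|⟨e1,e2,e3,e4⟩|⟨e1,e2,e3,e4⟩|⟨e1,e2,e3,e4⟩ <;>
            simp only [e1, e2, e3, e4]
          · exact iteA (fun h => ⟨h.1, by linarith [h.2]⟩) (fun h => ⟨by linarith [h.1], h.2⟩)
          · exact iteA' (fun h => ⟨h.1, by linarith [h.2]⟩) (fun h => ⟨by linarith [h.1], h.2⟩)
          · exact iteB (fun h => ⟨h.1, by linarith [h.2]⟩)
              (fun h => ⟨by linarith [h.1], by linarith [h.2]⟩)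
              (fun h h' => ⟨by linarith [h'.1], by linarith [h.2]⟩)
          · exact iteB' (fun h => ⟨h.1, by linarith [h.2]⟩)
              (fun h => ⟨by linarith [h.1], by linarith [h.2]⟩)
              (fun h h' => ⟨by linarith [h'.1], by linarith [h.2]⟩)
      _ = gg u s + gg u t := by rw [gg_of_ne hune.1, gg_of_ne hune.2]
  have hPhiDec : Phi M' + 2 ≤ Phi M := by
    rw [hPhiM, hPhiM', hggst, hggn]
    have := Nat.mul_le_mul_left 2 hsum
    omega
  -- distinctness of the pᵢ as points
  have pne : p₁ ≠ p₂ ∧ p₁ ≠ p₃ ∧ p₁ ≠ p₄ ∧ p₂ ≠ p₃ ∧ p₂ ≠ p₄ ∧ p₃ ≠ p₄ := by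
    refine ⟨?_, ?_, ?_, ?_, ?_, ?_⟩ <;> intro h <;>
      [skip; skip; skip; skip; skip; skip] <;>
      · have := congrArg Prod.fst h; linarith
  -- matching property for M'
  have hmatch : IsSegMatching P M' := by
    have hpiP : p₁ ∈ P ∧ p₂ ∈ P ∧ p₃ ∈ P ∧ p₄ ∈ P := by
      refine ⟨?_, ?_, ?_, ?_⟩
      · rcases hp1e with h|h|h|h <;> rw [h] <;> assumption
      · rcases hp2e with h|h|h|h <;> rw [h] <;> assumption
      · rcases hp3e with h|h|h|h <;> rw [h] <;> assumption
      · rcases hp4e with h|h|h|h <;> rw [h] <;> assumption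
    constructor
    · intro u hu
      rw [hM'eq] at hu
      simp only [Finset.mem_insert] at hu
      rcases hu with rfl|rfl|hu
      · exact ⟨hpiP.1, hpiP.2.1, pne.1⟩
      · exact ⟨hpiP.2.2.1, hpiP.2.2.2, pne.2.2.2.2.2⟩
      · exact hM.1 u (hRmem hu).1
    · intro p hp
      obtain ⟨u₀, hu₀, huniq₀⟩ := hM.2 p hp
      by_cases hp4 : p = p₁ ∨ p = p₂ ∨ p = p₃ ∨ p = p₄
      · -- p is one of the four flipped endpoints
        have hpst : p = s.1 ∨ p = s.2 ∨ p = t.1 ∨ p = t.2 := (hmem4 p).mpr hp4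
        have hkey : ∀ v ∈ R, ¬(p = v.1 ∨ p = v.2) := by
          intro v hv hpv
          obtain ⟨hvM, hvs, hvt⟩ := hRmem hv
          rcases hpst with h|h|h|h
          · exact hvs (endpoint_unique hM hvM hs p hpv (Or.inl h))
          · exact hvs (endpoint_unique hM hvM hs p hpv (Or.inr h))
          · exact hvt (endpoint_unique hM hvM ht p hpv (Or.inl h))
          · exact hvt (endpoint_unique hM hvM ht p hpv (Or.inr h))
        rcases hp4 with rfl|rfl|rfl|rfl
        · refine ⟨n₁, ⟨by rw [hM'eq]; exact Finset.mem_insert_self _ _, Or.inl rfl⟩, ?_⟩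
          rintro v ⟨hv, hpv⟩
          rw [hM'eq] at hv; simp only [Finset.mem_insert] at hv
          rcases hv with rfl|rfl|hv
          · rfl
          · exfalso; rcases hpv with h|h
            · exact pne.2.1 h
            · exact pne.2.2.1 h
          · exact absurd hpv (hkey v hv)
        · refine ⟨n₁, ⟨by rw [hM'eq]; exact Finset.mem_insert_self _ _, Or.inr rfl⟩, ?_⟩
          rintro v ⟨hv, hpv⟩
          rw [hM'eq] at hv; simp only [Finset.mem_insert] at hv
          rcases hv with rfl|rfl|hv
          · rfl
          · exfalso; rcases hpv with h|h
            · exact pne.2.2.2.1 h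
            · exact pne.2.2.2.2.1 h
          · exact absurd hpv (hkey v hv)
        · refine ⟨n₂, ⟨by rw [hM'eq]; exact Finset.mem_insert_of_mem (Finset.mem_insert_self _ _), Or.inl rfl⟩, ?_⟩
          rintro v ⟨hv, hpv⟩
          rw [hM'eq] at hv; simp only [Finset.mem_insert] at hv
          rcases hv with rfl|rfl|hv
          · exfalso; rcases hpv with h|h
            · exact pne.2.1 h.symm
            · exact pne.2.2.2.1 h.symm
          · rfl
          · exact absurd hpv (hkey v hv)
        · refine ⟨n₂, ⟨by rw [hM'eq]; exact Finset.mem_insert_of_mem (Finset.mem_insert_self _ _), Or.inr rfl⟩, ?_⟩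
          rintro v ⟨hv, hpv⟩
          rw [hM'eq] at hv; simp only [Finset.mem_insert] at hv
          rcases hv with rfl|rfl|hv
          · exfalso; rcases hpv with h|h
            · exact pne.2.2.1 h.symm
            · exact pne.2.2.2.2.1 h.symm
          · rfl
          · exact absurd hpv (hkey v hv)
      · -- p is not one of the four points
        have hpst : ¬(p = s.1 ∨ p = s.2 ∨ p = t.1 ∨ p = t.2) := fun h => hp4 ((hmem4 p).mp h)
        have hu₀st : u₀ ≠ s ∧ u₀ ≠ t := by
          constructor
          · rintro rfl
            refine hpst ?_
            rcases hu₀.2 with h|h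
            · exact Or.inl h
            · exact Or.inr (Or.inl h)
          · rintro rfl
            refine hpst ?_
            rcases hu₀.2 with h|h
            · exact Or.inr (Or.inr (Or.inl h))
            · exact Or.inr (Or.inr (Or.inr h))
        have hu₀R : u₀ ∈ R := by
          rw [hR, Finset.mem_sdiff]
          refine ⟨hu₀.1, ?_⟩
          simp only [Finset.mem_insert, Finset.mem_singleton]
          exact not_or.mpr ⟨hu₀st.1, hu₀st.2⟩
        have hu₀M' : u₀ ∈ M' := by
          rw [hM'eq]
          exact Finset.mem_insert_of_mem (Finset.mem_insert_of_mem hu₀R)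
        refine ⟨u₀, ⟨hu₀M', hu₀.2⟩, ?_⟩
        rintro v ⟨hv, hpv⟩
        rw [hM'eq] at hv; simp only [Finset.mem_insert] at hv
        rcases hv with rfl|rfl|hv
        · exfalso
          refine hp4 ?_
          rcases hpv with h|h
          · exact Or.inl h
          · exact Or.inr (Or.inl h)
        · exfalso
          refine hp4 ?_
          rcases hpv with h|h
          · exact Or.inr (Or.inr (Or.inl h))
          · exact Or.inr (Or.inr (Or.inr h))
        · exact huniq₀ v ⟨(hRmem hv).1, hpv⟩
  -- flip property
  have hflip : IsXSortedFlip M M' := by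
    refine ⟨p₁, p₂, p₃, p₄, s, t, hs, ht, hst, h12, h23, h34, ?_, ⟨z, hz1, hz2⟩, rfl⟩
    ext q
    simp only [Set.mem_insert_iff, Set.mem_singleton_iff]
    exact hmem4 q
  exact ⟨M', hflip, hmatch, hPhiDec⟩


lemma matching_card {P : Finset (ℝ × ℝ)} {M : Finset Seg} (hM : IsSegMatching P M) :
    P.card = 2 * M.card := by
  have hP : P = M.biUnion (fun s => {s.1, s.2}) := by
    ext p
    simp only [Finset.mem_biUnion, Finset.mem_insert, Finset.mem_singleton]
    constructor
    · intro hp; obtain ⟨u, hu, _⟩ := hM.2 p hp; exact ⟨u, hu.1, hu.2⟩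
    · rintro ⟨u, hu, h|h⟩ <;> subst h
      · exact (hM.1 u hu).1
      · exact (hM.1 u hu).2.1
  rw [hP, Finset.card_biUnion]
  · have : ∀ u ∈ M, ({u.1, u.2} : Finset (ℝ × ℝ)).card = 2 := by
      intro u hu
      rw [Finset.card_insert_of_notMem (by simp [(hM.1 u hu).2.2]), Finset.card_singleton]
    rw [Finset.sum_congr rfl this, Finset.sum_const, smul_eq_mul, mul_comm]
  · intro u hu v hv huv
    rw [Function.onFun, Finset.disjoint_left]
    intro p hp1 hp2
    simp only [Finset.mem_insert, Finset.mem_singleton] at hp1 hp2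
    exact huv (endpoint_unique hM hu hv p hp1 hp2)

lemma Phi_le (M : Finset Seg) : Phi M ≤ M.card * (M.card - 1) := by
  unfold Phi
  have hinner : ∀ u ∈ M, ∑ v ∈ M, gg u v ≤ M.card - 1 := by
    intro u hu
    rw [← Finset.add_sum_erase M _ hu, gg_self, zero_add]
    calc ∑ v ∈ M.erase u, gg u v ≤ ∑ v ∈ M.erase u, 1 :=
          Finset.sum_le_sum (fun v _ => gg_le_one u v)
      _ = (M.erase u).card := by rw [Finset.sum_const, smul_eq_mul, mul_one]
      _ = M.card - 1 := Finset.card_erase_of_mem hu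
  calc ∑ u ∈ M, ∑ v ∈ M, gg u v ≤ ∑ u ∈ M, (M.card - 1) := Finset.sum_le_sum hinner
    _ = M.card * (M.card - 1) := by rw [Finset.sum_const, smul_eq_mul]

lemma aux_bound (n : ℕ) : n * (n - 1) ≤ 2 * (n ^ 2 / 2) := by
  rcases Nat.even_or_odd n with ⟨a, rfl⟩ | ⟨a, rfl⟩
  · have h : (a + a) ^ 2 = 2 * (2 * a ^ 2) := by ring
    rw [h, Nat.mul_div_cancel_left _ two_pos]
    calc (a + a) * ((a + a) - 1) ≤ (a + a) * (a + a) :=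
          Nat.mul_le_mul_left _ (Nat.sub_le _ _)
      _ = 2 * (2 * a ^ 2) := by ring
  · have h : (2 * a + 1) ^ 2 = 2 * (2 * a ^ 2 + 2 * a) + 1 := by ring
    have hD : (2 * (2 * a ^ 2 + 2 * a) + 1) / 2 = 2 * a ^ 2 + 2 * a := by omega
    rw [h, hD]
    have hL : (2 * a + 1) * ((2 * a + 1) - 1) = 4 * a ^ 2 + 2 * a := by
      simp only [Nat.add_sub_cancel]
      ring
    rw [hL]
    nlinarith [sq_nonneg a]

lemma reach (P : Finset (ℝ × ℝ)) (hinj : Set.InjOn Prod.fst (↑P : Set (ℝ × ℝ))) :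
    ∀ m (M : Finset Seg), IsSegMatching P M → Phi M ≤ 2 * m →
    ∃ k ≤ m, ∃ f : ℕ → Finset Seg,
      f 0 = M ∧ (∀ i < k, IsXSortedFlip (f i) (f (i + 1))) ∧
      (∀ s ∈ f k, ∀ t ∈ f k, s ≠ t →
        Disjoint (openSegment ℝ s.1 s.2) (openSegment ℝ t.1 t.2)) := by
  intro m
  induction m with
  | zero =>
    intro M hM hP
    refine ⟨0, le_refl _, fun _ => M, rfl, fun i hi => absurd hi (Nat.not_lt_zero i), ?_⟩
    intro s hs t ht hst
    by_contra hnd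
    obtain ⟨z, hz⟩ := Set.not_disjoint_iff_nonempty_inter.mp hnd
    obtain ⟨M', _, _, hdec⟩ := flip_step P hinj M hM s t hs ht hst ⟨z, hz⟩
    omega
  | succ m ih =>
    intro M hM hP
    by_cases hcr : ∀ s ∈ M, ∀ t ∈ M, s ≠ t →
        Disjoint (openSegment ℝ s.1 s.2) (openSegment ℝ t.1 t.2)
    · exact ⟨0, Nat.zero_le _, fun _ => M, rfl, fun i hi => absurd hi (Nat.not_lt_zero i), hcr⟩
    · push_neg at hcr
      obtain ⟨s, hs, t, ht, hst, hnd⟩ := hcr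
      obtain ⟨z, hz⟩ := Set.not_disjoint_iff_nonempty_inter.mp hnd
      obtain ⟨M', hflip, hmatch, hdec⟩ := flip_step P hinj M hM s t hs ht hst ⟨z, hz⟩
      have hP' : Phi M' ≤ 2 * m := by omega
      obtain ⟨k, hk, f, hf0, hfl, hnc⟩ := ih M' hmatch hP'
      refine ⟨k + 1, by omega, fun i => if i = 0 then M else f (i - 1), by simp, ?_, ?_⟩
      · intro i hi
        cases i with
        | zero =>
          simp only [if_pos rfl, if_neg (Nat.one_ne_zero)]
          simpa [hf0] using hflip
        | succ j =>
          have h1 : j + 1 ≠ 0 := Nat.succ_ne_zero j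
          have h2 : j + 1 + 1 ≠ 0 := Nat.succ_ne_zero _
          simp only [if_neg h1, if_neg h2, Nat.add_sub_cancel]
          exact hfl j (by omega)
      · have h1 : k + 1 ≠ 0 := Nat.succ_ne_zero k
        simp only [if_neg h1, Nat.add_sub_cancel]
        exact hnc


/-- With the strategy that always replaces a crossing pair on `x`-sorted
endpoints `p₁, p₂, p₃, p₄` by the segments `p₁p₂` and `p₃p₄`, any perfect
straight-line matching on `2n` points in general position with distinct
`x`-coordinates reaches a non-crossing matching after at most `n²/2` flips. -/
theorem xsorted_flips_reach_noncrossing (n : ℕ) (P : Finset (ℝ × ℝ))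
    (hcard : P.card = 2 * n)
    (hinj : Set.InjOn Prod.fst (↑P : Set (ℝ × ℝ)))
    (hgp : ∀ p ∈ P, ∀ q ∈ P, ∀ r ∈ P, p ≠ q → p ≠ r → q ≠ r →
      ¬ Collinear ℝ ({p, q, r} : Set (ℝ × ℝ)))
    (M : Finset ((ℝ × ℝ) × (ℝ × ℝ))) (hM : IsSegMatching P M) :
    ∃ k ≤ n ^ 2 / 2, ∃ f : ℕ → Finset ((ℝ × ℝ) × (ℝ × ℝ)),
      f 0 = M ∧
      (∀ i < k, IsXSortedFlip (f i) (f (i + 1))) ∧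
      (∀ s ∈ f k, ∀ t ∈ f k, s ≠ t →
        Disjoint (openSegment ℝ s.1 s.2) (openSegment ℝ t.1 t.2)) := by
  have hMcard : M.card = n := by
    have := matching_card hM
    omega
  have hbound : Phi M ≤ 2 * (n ^ 2 / 2) := by
    calc Phi M ≤ M.card * (M.card - 1) := Phi_le M
      _ = n * (n - 1) := by rw [hMcard]
      _ ≤ 2 * (n ^ 2 / 2) := aux_bound n
  exact reach P hinj (n ^ 2 / 2) M hM hbound

end
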